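/- Let (A, ≤, ', 0, 1) be a finite orthomodular poset and (T, R) a time frame with R serial. Define tense operators on A^T by P(q)(s) := Min U({q(t) : t R s}) and G(q)(s) := Max L({q(t) : s R t}). Then (P, G) satisfies: (P1) G(1)(s) = {1} and P(0)(s) = {0} for all s; (P2) p ≤ q implies G(p)(s) ≤₁ G(q)(s) and P(p)(s) ≤₂ P(q)(s) for all s; (P3) for all q ∈ A^T and s ∈ T, q(s) ≤₁ (G*P)(q)(s) and (P*G)(q)(s) ≤₂ q(s), where (G*P)(q)(s) = Max L(⋃{Min U({q(t) : t R v}) : s R v}) and (P*G)(q)(s) = Min U(⋃{Max L({q(t) : v R t}) : v R s}). -/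

import Mathlib

section
variable (A : Type*)

/-- Set of minimal upper bounds. -/
def MinU [PartialOrder A] (S : Set A) : Set A := {a | Minimal (· ∈ upperBounds S) a}

/-- Set of maximal lower bounds. -/
def MaxL [PartialOrder A] (S : Set A) : Set A := {a | Maximal (· ∈ lowerBounds S) a}

/-- An orthomodular poset: a bounded poset with an antitone involution that is a
complementation, such that orthogonal elements have a join and the orthomodular law holds. -/
structure OMP [PartialOrder A] [BoundedOrder A] where
  compl : A → A
  compl_antitone : ∀ a b : A, a ≤ b → compl b ≤ compl a
  compl_involutive : ∀ a : A, compl (compl a) = a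
  sup_compl : ∀ a : A, IsLUB {a, compl a} ⊤
  inf_compl : ∀ a : A, IsGLB {a, compl a} ⊥
  ortho_sup : ∀ a b : A, a ≤ compl b → ∃ c, IsLUB {a, b} c
  oml : ∀ a b m : A, a ≤ b → IsGLB {b, compl a} m → IsLUB {a, m} b

end

section
variable {A T : Type*} [PartialOrder A]

/-- `B ≤₁ C`: every element of `B` is below some element of `C`. -/
def le1 (B C : Set A) : Prop := ∀ b ∈ B, ∃ c ∈ C, b ≤ c

/-- `B ≤₂ C`: every element of `C` is above some element of `B`. -/
def le2 (B C : Set A) : Prop := ∀ c ∈ C, ∃ b ∈ B, b ≤ c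

/-- The tense operator `P(q)(s) := Min U({q(t) : t R s})`. -/
def Pop (R : T → T → Prop) (q : T → A) (s : T) : Set A := MinU A (q '' {t | R t s})

/-- The tense operator `F(q)(s) := Min U({q(t) : s R t})`. -/
def Fop (R : T → T → Prop) (q : T → A) (s : T) : Set A := MinU A (q '' {t | R s t})

/-- The tense operator `H(q)(s) := Max L({q(t) : t R s})`. -/
def Hop (R : T → T → Prop) (q : T → A) (s : T) : Set A := MaxL A (q '' {t | R t s})

/-- The tense operator `G(q)(s) := Max L({q(t) : s R t})`. -/
def Gop (R : T → T → Prop) (q : T → A) (s : T) : Set A := MaxL A (q '' {t | R s t})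

/-- A relation is serial if every element has a predecessor and a successor. -/
def Serial (R : T → T → Prop) : Prop := ∀ s : T, (∃ r, R r s) ∧ (∃ t, R s t)

end

/-- The couple `(P, G)` of tense operators on a finite orthomodular poset with a serial time
frame forms a dynamic pair: (P1) `G(1) = 1` and `P(0) = 0`; (P2) both operators are monotone
(w.r.t. `≤₁` resp. `≤₂`); (P3) `q ≤₁ (G*P)(q)` and `(P*G)(q) ≤₂ q`. -/
theorem stmt_10 {A T : Type*} [PartialOrder A] [BoundedOrder A] [Finite A] (M : OMP A)
    (R : T → T → Prop) (hR : Serial R) :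
    (∀ s : T, Gop R (fun _ => (⊤ : A)) s = {⊤} ∧ Pop R (fun _ => (⊥ : A)) s = {⊥}) ∧
    (∀ p q : T → A, (∀ t, p t ≤ q t) →
      ∀ s : T, le1 (Gop R p s) (Gop R q s) ∧ le2 (Pop R p s) (Pop R q s)) ∧
    (∀ (q : T → A) (s : T),
      le1 {q s} (MaxL A (⋃ v ∈ {v | R s v}, MinU A (q '' {t | R t v}))) ∧
      le2 (MinU A (⋃ v ∈ {v | R v s}, MaxL A (q '' {t | R v t}))) {q s}) := by
  refine ⟨fun s => ⟨?_, ?_⟩, fun p q hpq s => ⟨?_, ?_⟩, fun q s => ⟨?_, ?_⟩⟩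
  · ext a
    simp only [Gop, MaxL, Set.mem_setOf_eq, Set.mem_singleton_iff]
    constructor
    · intro h
      exact le_antisymm le_top (h.2 (fun x hx => by rcases hx with ⟨t, _, rfl⟩; exact le_rfl) le_top)
    · rintro rfl
      refine ⟨fun x hx => ?_, fun y _ _ => le_top⟩
      rcases hx with ⟨t, _, rfl⟩; exact le_top
  · ext a
    simp only [Pop, MinU, Set.mem_setOf_eq, Set.mem_singleton_iff]
    constructor
    · intro h
      exact le_antisymm (h.2 (fun x hx => by rcases hx with ⟨t, _, rfl⟩; exact le_rfl) bot_le) bot_le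
    · rintro rfl
      refine ⟨fun x hx => ?_, fun y _ _ => bot_le⟩
      rcases hx with ⟨t, _, rfl⟩; exact le_rfl
  · intro b hb
    have hlb : b ∈ lowerBounds (q '' {t | R s t}) := by
      rintro x ⟨t, ht, rfl⟩
      exact (hb.1 ⟨t, ht, rfl⟩).trans (hpq t)
    obtain ⟨c, hbc, hc⟩ := Finite.exists_le_maximal hlb
    exact ⟨c, hc, hbc⟩
  · intro c hc
    have hub : c ∈ upperBounds (p '' {t | R t s}) := by
      rintro x ⟨t, ht, rfl⟩
      exact (hpq t).trans (hc.1 ⟨t, ht, rfl⟩)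
    obtain ⟨b, hbc, hb⟩ := exists_minimal_le_of_wellFoundedLT _ _ hub
    exact ⟨b, hb, hbc⟩
  · intro b hb
    rcases hb with rfl
    have hlb : q s ∈ lowerBounds (⋃ v ∈ {v | R s v}, MinU A (q '' {t | R t v})) := by
      intro x hx
      simp only [Set.mem_iUnion] at hx
      obtain ⟨v, hv, hxv⟩ := hx
      exact hxv.1 ⟨s, hv, rfl⟩
    obtain ⟨c, hbc, hc⟩ := Finite.exists_le_maximal hlb
    exact ⟨c, hc, hbc⟩
  · intro c hc
    rcases hc with rfl
    have hub : q s ∈ upperBounds (⋃ v ∈ {v | R v s}, MaxL A (q '' {t | R v t})) := by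
      intro x hx
      simp only [Set.mem_iUnion] at hx
      obtain ⟨v, hv, hxv⟩ := hx
      exact hxv.1 ⟨s, hv, rfl⟩
    obtain ⟨b, hbc, hb⟩ := exists_minimal_le_of_wellFoundedLT _ _ hub
    exact ⟨b, hb, hbc⟩
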